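/- arXiv:2411.16144 — 2 statements merged into one kernel-verified Lean document; each statement's English description precedes it below -/
import Mathlib

section
/- Tightness of Cantelli: for any μ ∈ ℝ, σ² > 0, and t > 0, there exists a two-point distribution with mean μ and variance σ² such that P(X - μ ≥ t) = σ²/(σ² + t²). -/
open MeasureTheory

lemma my_integrable_dirac {f : ℝ → ℝ} (hf : Measurable f) (a : ℝ) :
    Integrable f (Measure.dirac a) := by
  refine ⟨hf.aestronglyMeasurable, ?_⟩
  rw [HasFiniteIntegral, lintegral_dirac' a (by fun_prop)]
  exact ENNReal.coe_lt_top

/-- Tightness of Cantelli: for any `μ ∈ ℝ`, `σ2 > 0`, and `t > 0`, there exists a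
two-point distribution (probability `p` at `a`, probability `1 - p` at `b`) with
mean `μ` and variance `σ2` such that `P(X - μ ≥ t) = σ2 / (σ2 + t²)`. -/
theorem cantelli_tight (μ σ2 t : ℝ) (hσ : 0 < σ2) (ht : 0 < t) :
    ∃ (a b p : ℝ), 0 ≤ p ∧ p ≤ 1 ∧
      ∀ P : Measure ℝ,
        P = ENNReal.ofReal p • Measure.dirac a + ENNReal.ofReal (1 - p) • Measure.dirac b →
        IsProbabilityMeasure P ∧
        (∫ x, x ∂P = μ) ∧
        (∫ x, (x - μ) ^ 2 ∂P = σ2) ∧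
        (P {x | t ≤ x - μ}).toReal = σ2 / (σ2 + t ^ 2) := by
  have hst : 0 < σ2 + t ^ 2 := by positivity
  set p : ℝ := σ2 / (σ2 + t ^ 2) with hp
  have hp0 : 0 ≤ p := by positivity
  have hp1 : p ≤ 1 := by
    rw [hp, div_le_one hst]; nlinarith
  refine ⟨μ + t, μ - σ2 / t, p, hp0, hp1, ?_⟩
  intro P hP
  have h1p : 0 ≤ 1 - p := by linarith
  -- helper for integrals
  have hint : ∀ f : ℝ → ℝ, Measurable f →
      ∫ x, f x ∂P = p * f (μ + t) + (1 - p) * f (μ - σ2 / t) := by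
    intro f hf
    rw [hP, integral_add_measure, integral_smul_measure, integral_smul_measure,
        integral_dirac' _ _ hf.stronglyMeasurable,
        integral_dirac' _ _ hf.stronglyMeasurable,
        smul_eq_mul, smul_eq_mul, ENNReal.toReal_ofReal hp0, ENNReal.toReal_ofReal h1p]
    · exact (my_integrable_dirac hf _).smul_measure ENNReal.ofReal_ne_top
    · exact (my_integrable_dirac hf _).smul_measure ENNReal.ofReal_ne_top
  constructor
  · constructor
    rw [hP]
    simp [Measure.add_apply, ← ENNReal.ofReal_add hp0 h1p]
  constructor
  · have h := hint (fun x => x) (by fun_prop)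
    rw [h, hp]
    have hne : σ2 + t ^ 2 ≠ 0 := hst.ne'
    field_simp
    ring
  constructor
  · rw [hint _ (by fun_prop)]
    have : (μ + t - μ) = t := by ring
    rw [this]
    have : (μ - σ2 / t - μ) = -(σ2 / t) := by ring
    rw [this]
    have h1pe : 1 - p = t ^ 2 / (σ2 + t ^ 2) := by
      rw [hp]; field_simp; ring
    rw [h1pe, hp]
    field_simp
    ring
  · have hmem : μ + t ∈ {x : ℝ | t ≤ x - μ} := by simp
    have hnmem : μ - σ2 / t ∉ {x : ℝ | t ≤ x - μ} := by
      simp only [Set.mem_setOf_eq, not_le]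
      have : 0 < σ2 / t := by positivity
      linarith
    have hmeas : MeasurableSet {x : ℝ | t ≤ x - μ} :=
      measurableSet_le measurable_const (by fun_prop)
    rw [hP, Measure.add_apply, Measure.smul_apply, Measure.smul_apply,
        Measure.dirac_apply' _ hmeas, Measure.dirac_apply' _ hmeas,
        Set.indicator_of_mem hmem, Set.indicator_of_notMem hnmem]
    simp [ENNReal.toReal_ofReal hp0, hp, div_nonneg hσ.le hst.le]
end

section
/- Worst-case chance constraint over a mean-variance ambiguity set: let a ∈ ℝⁿ, b ∈ ℝ, and let F be the set of all distributions on ℝⁿ with mean vector μ and positive definite covariance Σ. Then inf over P ∈ F of P(aᵀτ ≤ b) ≥ 1 - δ holds if and only if aᵀμ + sqrt((1-δ)/δ) · sqrt(aᵀΣa) ≤ b. -/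
open MeasureTheory Matrix


section Discrete
variable {n : ℕ} {ι : Type*} [Fintype ι] (x : ι → (Fin n → ℝ)) (q : ι → ℝ)

noncomputable def discMeasure : Measure (Fin n → ℝ) :=
  ∑ k : ι, (ENNReal.ofReal (q k)) • Measure.dirac (x k)

open scoped Classical in
lemma discMeasure_apply {A : Set (Fin n → ℝ)} (hA : MeasurableSet A) :
    discMeasure x q A = ∑ k : ι, (if x k ∈ A then ENNReal.ofReal (q k) else 0) := by
  rw [discMeasure, Measure.finset_sum_apply]
  refine Finset.sum_congr rfl fun k _ => ?_
  rw [Measure.smul_apply, Measure.dirac_apply' _ hA]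
  by_cases h : x k ∈ A <;> simp [h]

lemma discMeasure_isProb (hq : ∀ k, 0 ≤ q k) (hq1 : ∑ k : ι, q k = 1) :
    IsProbabilityMeasure (discMeasure x q) := by
  constructor
  rw [discMeasure_apply x q MeasurableSet.univ]
  simp [← ENNReal.ofReal_sum_of_nonneg (fun k _ => hq k), hq1]

lemma discMeasure_integrable {f : (Fin n → ℝ) → ℝ} (hf : StronglyMeasurable f) :
    Integrable f (discMeasure x q) := by
  rw [discMeasure, integrable_finset_sum_measure]
  intro k _
  refine Integrable.smul_measure ?_ ENNReal.ofReal_ne_top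
  refine ⟨hf.aestronglyMeasurable, ?_⟩
  rw [HasFiniteIntegral, lintegral_dirac' _ (hf.measurable.enorm)]
  exact ENNReal.coe_lt_top

lemma discMeasure_integral (hq : ∀ k, 0 ≤ q k) {f : (Fin n → ℝ) → ℝ}
    (hf : StronglyMeasurable f) :
    ∫ τ, f τ ∂(discMeasure x q) = ∑ k : ι, q k * f (x k) := by
  rw [discMeasure, integral_finset_sum_measure (fun k _ => by
    refine Integrable.smul_measure ?_ ENNReal.ofReal_ne_top
    refine ⟨hf.aestronglyMeasurable, ?_⟩
    rw [HasFiniteIntegral, lintegral_dirac' _ (hf.measurable.enorm)]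
    exact ENNReal.coe_lt_top)]
  refine Finset.sum_congr rfl fun k _ => ?_
  rw [integral_smul_measure, integral_dirac' _ _ hf, ENNReal.toReal_ofReal (hq k), smul_eq_mul]

lemma discMeasure_memLp (hq : ∀ k, 0 ≤ q k) (hq1 : ∑ k : ι, q k = 1) (i : Fin n) :
    MemLp (fun τ => τ i) 2 (discMeasure x q) := by
  have : IsProbabilityMeasure (discMeasure x q) := discMeasure_isProb x q hq hq1
  refine MemLp.mono_exponent (q := ⊤) ?_ le_top
  refine memLp_top_of_bound ((measurable_pi_apply i).aestronglyMeasurable) (∑ k : ι, |x k i|) ?_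
  rw [Filter.eventually_iff, mem_ae_iff]
  have hA : MeasurableSet {τ : Fin n → ℝ | ‖τ i‖ ≤ ∑ k : ι, |x k i|} :=
    measurableSet_le (measurable_pi_apply i).norm measurable_const
  rw [discMeasure_apply x q hA.compl]
  refine Finset.sum_eq_zero fun k _ => ?_
  have : x k ∈ {τ : Fin n → ℝ | ‖τ i‖ ≤ ∑ k : ι, |x k i|} := by
    simp only [Set.mem_setOf_eq, Real.norm_eq_abs]
    exact Finset.single_le_sum (fun k _ => abs_nonneg (x k i)) (Finset.mem_univ k)
  simp only [Set.mem_compl_iff]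
  rw [if_neg (not_not_intro this)]
end Discrete



lemma memLp_mul_integrable {Ω : Type*} [MeasurableSpace Ω] {P : Measure Ω} {f g : Ω → ℝ}
    (hf : MemLp f 2 P) (hg : MemLp g 2 P) : Integrable (fun ω => f ω * g ω) P := by
  rw [← memLp_one_iff_integrable]
  have := hg.smul (E := ℝ) (𝕜 := ℝ) hf (p := 2) (q := 2) (r := 1)
  exact this

lemma cantelli {Ω : Type*} [MeasurableSpace Ω] (P : Measure Ω) [IsProbabilityMeasure P]
    {X : Ω → ℝ} (hX : MemLp X 2 P) (hmean : ∫ ω, X ω ∂P = 0)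
    {v t : ℝ} (hv : ∫ ω, X ω ^ 2 ∂P = v) (ht : 0 < t) :
    (P {ω | t ≤ X ω}).toReal ≤ v / (v + t ^ 2) := by
  have hv0 : 0 ≤ v := hv ▸ integral_nonneg (fun ω => sq_nonneg _)
  set u : ℝ := v / t with hu
  have hu0 : 0 ≤ u := div_nonneg hv0 ht.le
  have hXint : Integrable X P := hX.integrable one_le_two
  have hX2int : Integrable (fun ω => X ω ^ 2) P := hX.integrable_sq
  -- integral of (X+u)^2 = v + u^2
  have hint : Integrable (fun ω => (X ω + u) ^ 2) P := by
    have : MemLp (fun ω => X ω + u) 2 P := hX.add (memLp_const u)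
    exact this.integrable_sq
  have hI : ∫ ω, (X ω + u) ^ 2 ∂P = v + u ^ 2 := by
    have : ∀ ω, (X ω + u) ^ 2 = X ω ^ 2 + (2 * u * X ω + u ^ 2) := by intro ω; ring
    have h2 : Integrable (fun ω => 2 * u * X ω + u ^ 2) P :=
      (hXint.const_mul (2*u)).add (integrable_const _)
    rw [integral_congr_ae (Filter.Eventually.of_forall this),
      integral_add hX2int h2,
      integral_add (hXint.const_mul (2*u)) (integrable_const _),
      MeasureTheory.integral_const_mul, hmean, hv]
    simp [measure_univ]
  -- Markov
  have hmono : {ω | t ≤ X ω} ⊆ {ω | (t + u) ^ 2 ≤ (X ω + u) ^ 2} := by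
    intro ω hω
    have h1 : t + u ≤ X ω + u := by linarith [Set.mem_setOf_eq ▸ hω]
    exact Set.mem_setOf_eq ▸ pow_le_pow_left₀ (by linarith) h1 2
  have hmarkov := mul_meas_ge_le_integral_of_nonneg
    (Filter.Eventually.of_forall (fun ω => sq_nonneg (X ω + u))) hint ((t + u) ^ 2)
  have hle : (P {ω | t ≤ X ω}).toReal ≤ (P {ω | (t + u) ^ 2 ≤ (X ω + u) ^ 2}).toReal := by
    exact ENNReal.toReal_mono (measure_ne_top _ _) (measure_mono hmono)
  have htu : (0:ℝ) < (t + u) ^ 2 := by positivity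
  have key : (P {ω | t ≤ X ω}).toReal ≤ (v + u ^ 2) / (t + u) ^ 2 := by
    rw [← hI]
    calc (P {ω | t ≤ X ω}).toReal ≤ (P {ω | (t + u) ^ 2 ≤ (X ω + u) ^ 2}).toReal := hle
    _ ≤ (∫ ω, (X ω + u) ^ 2 ∂P) / (t + u) ^ 2 := by
        rw [le_div_iff₀ htu]; simp only [measureReal_def] at hmarkov; linarith [hmarkov]
  refine key.trans (le_of_eq ?_)
  rw [hu]
  have ht' : t ≠ 0 := ht.ne'
  have : v + t^2 ≠ 0 := by positivity
  field_simp
  ring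

lemma sum_bool_fin_bool {n : ℕ} {M : Type*} [AddCommMonoid M] (F : Bool × Fin n × Bool → M) :
    ∑ z : Bool × Fin n × Bool, F z
      = ∑ k : Fin n, (F (true, k, true) + F (true, k, false)
          + (F (false, k, true) + F (false, k, false))) := by
  rw [Fintype.sum_prod_type, Fintype.sum_bool, Fintype.sum_prod_type, Fintype.sum_prod_type,
    ← Finset.sum_add_distrib]
  exact Finset.sum_congr rfl fun k _ => by rw [Fintype.sum_bool, Fintype.sum_bool]

open scoped MatrixOrder in
set_option maxHeartbeats 2000000 in
lemma exists_bad_measure {n : ℕ} (hn : 0 < n) (a : Fin n → ℝ) (b : ℝ) (μ : Fin n → ℝ)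
    (S : Matrix (Fin n) (Fin n) ℝ) (hS : S.PosDef) (δ : ℝ) (hδ : δ ∈ Set.Ioo (0:ℝ) 1)
    (hb : b < ∑ i, a i * μ i +
      Real.sqrt ((1 - δ) / δ) * Real.sqrt (∑ i, ∑ j, a i * S i j * a j)) :
    ∃ P : Measure (Fin n → ℝ), IsProbabilityMeasure P ∧ (∀ i, MemLp (fun τ => τ i) 2 P) ∧
      (∀ i, ∫ τ, τ i ∂P = μ i) ∧ (∀ i j, ∫ τ, (τ i - μ i) * (τ j - μ j) ∂P = S i j) ∧
      P {τ | ∑ i, a i * τ i ≤ b} < ENNReal.ofReal (1 - δ) := by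
  classical
  obtain ⟨hδ0, hδ1⟩ := hδ
  have hn' : (n:ℝ) ≠ 0 := Nat.cast_ne_zero.mpr hn.ne'
  have hnn : (0:ℝ) ≤ (n:ℝ) := Nat.cast_nonneg n
  set m := ∑ i, a i * μ i with hm
  set s2 := ∑ i, ∑ j, a i * S i j * a j with hs2
  -- quadratic form rewriting
  have hquad : ∀ (T : Matrix (Fin n) (Fin n) ℝ) (x y : Fin n → ℝ),
      x ⬝ᵥ T.mulVec y = ∑ i, ∑ j, x i * T i j * y j := by
    intro T x y
    simp [dotProduct, Matrix.mulVec, Finset.mul_sum, mul_assoc]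
  have hSsym : ∀ i j, S j i = S i j := fun i j => by
    have := congrFun (congrFun hS.1.eq i) j
    simpa [Matrix.conjTranspose_apply] using this
  have hs2nn : 0 ≤ s2 := by
    have := hS.posSemidef.dotProduct_mulVec_nonneg a
    rw [hquad] at this
    simpa using this
  set s := Real.sqrt s2 with hs
  have hss : s * s = s2 := Real.mul_self_sqrt hs2nn
  have hsnn : 0 ≤ s := Real.sqrt_nonneg _
  set w : Fin n → ℝ := fun i => (∑ j, S i j * a j) / s with hw
  set t := b - m with ht
  -- fact: ∑ a i * w i = s
  have hsaw : ∑ i, a i * w i = s := by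
    by_cases ha : a = 0
    · have : s2 = 0 := by rw [hs2]; simp [ha]
      rw [hs, this]
      simp [hw, ha, Real.sqrt_zero]
    · have hs2pos : 0 < s2 := by
        have := hS.dotProduct_mulVec_pos ha
        rw [show (star a) = a from rfl, hquad] at this
        simpa using this
      have hspos : 0 < s := Real.sqrt_pos.mpr hs2pos
      rw [hw]
      rw [show ∑ i, a i * ((∑ j, S i j * a j) / s) = (∑ i, ∑ j, a i * S i j * a j) / s by
        rw [Finset.sum_div]
        exact Finset.sum_congr rfl fun i _ => by rw [Finset.sum_div, Finset.mul_sum, Finset.sum_div]; exact Finset.sum_congr rfl fun j _ => by ring]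
      rw [← hs2, ← hss, mul_div_assoc, div_self hspos.ne', mul_one]
  -- the matrix M = S - w wᵀ is PSD
  set M : Matrix (Fin n) (Fin n) ℝ := Matrix.of (fun i j => S i j - w i * w j) with hM
  have hMsym : ∀ i j, M j i = M i j := fun i j => by
    simp only [hM, Matrix.of_apply]
    rw [hSsym]; ring
  have hMpsd : M.PosSemidef := by
    refine Matrix.PosSemidef.of_dotProduct_mulVec_nonneg ?_ ?_
    · ext i j
      simp only [Matrix.conjTranspose_apply, star_trivial]
      exact (hMsym j i).symm
    · intro x
      rw [show (star x) = x from rfl, hquad]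
      simp only [hM, Matrix.of_apply]
      have key : (∑ i, x i * w i) ^ 2 ≤ ∑ i, ∑ j, x i * S i j * x j := by
        by_cases ha : a = 0
        · have hw0 : ∀ i, w i = 0 := fun i => by simp [hw, ha]
          have : ∑ i, x i * w i = 0 := Finset.sum_eq_zero fun i _ => by rw [hw0]; ring
          rw [this]
          have := hS.posSemidef.dotProduct_mulVec_nonneg x
          rw [hquad] at this
          simpa using this
        · have hs2pos : 0 < s2 := by
            have := hS.dotProduct_mulVec_pos ha
            rw [show (star a) = a from rfl, hquad] at this
            simpa using this
          have hspos : 0 < s := Real.sqrt_pos.mpr hs2pos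
          set c := ∑ i, ∑ j, x i * S i j * a j with hc
          -- x ⬝ w = c / s
          have hxw : ∑ i, x i * w i = c / s := by
            rw [hc, Finset.sum_div]
            refine Finset.sum_congr rfl fun i _ => ?_
            simp only [hw]
            rw [← mul_div_assoc, Finset.mul_sum]
            exact congrArg (· / s) (Finset.sum_congr rfl fun j _ => (mul_assoc _ _ _).symm)
          -- Cauchy-Schwarz via discriminant
          have hQx : 0 ≤ ∑ i, ∑ j, x i * S i j * x j := by
            have := hS.posSemidef.dotProduct_mulVec_nonneg x
            rw [hquad] at this
            simpa using this
          have hsym_c : ∑ i, ∑ j, a i * S i j * x j = c := by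
            rw [hc, Finset.sum_comm]
            exact Finset.sum_congr rfl fun j _ => Finset.sum_congr rfl fun i _ => by
              rw [hSsym j i]; ring
          have hdisc : (2 * c) ^ 2 - 4 * s2 * (∑ i, ∑ j, x i * S i j * x j) ≤ 0 := by
            have hq : ∀ r : ℝ, 0 ≤ s2 * (r * r) + (2 * c) * r + ∑ i, ∑ j, x i * S i j * x j := by
              intro r
              have hpos := hS.posSemidef.dotProduct_mulVec_nonneg (fun i => x i + r * a i)
              rw [hquad] at hpos
              simp only [Pi.star_apply, star_trivial] at hpos
              have hexp : ∑ i, ∑ j, (x i + r * a i) * S i j * (x j + r * a j)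
                  = s2 * (r * r) + (2 * c) * r + ∑ i, ∑ j, x i * S i j * x j := by
                rw [hs2, hc]
                rw [show ∑ i, ∑ j, (x i + r * a i) * S i j * (x j + r * a j)
                    = ∑ i, ∑ j, (x i * S i j * x j + r * (x i * S i j * a j)
                      + r * (a i * S i j * x j) + (r*r) * (a i * S i j * a j)) from
                  Finset.sum_congr rfl fun i _ => Finset.sum_congr rfl fun j _ => by ring]
                simp only [Finset.sum_add_distrib, ← Finset.mul_sum]
                rw [hsym_c, hc]
                ring
              rw [hexp] at hpos
              simpa using hpos
            have := discrim_le_zero hq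
            rw [discrim] at this
            linarith only [this]
          have hle : c ^ 2 ≤ s2 * (∑ i, ∑ j, x i * S i j * x j) := by nlinarith only [hdisc]
          rw [hxw, div_pow]
          rw [div_le_iff₀ (by positivity : (0:ℝ) < s ^ 2)]
          calc c ^ 2 ≤ s2 * (∑ i, ∑ j, x i * S i j * x j) := hle
          _ = (∑ i, ∑ j, x i * S i j * x j) * s ^ 2 := by rw [← hss]; ring
      have expand : ∑ i, ∑ j, x i * (S i j - w i * w j) * x j
          = (∑ i, ∑ j, x i * S i j * x j) - (∑ i, x i * w i)^2 := by
        rw [pow_two, Finset.sum_mul_sum, ← Finset.sum_sub_distrib]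
        refine Finset.sum_congr rfl fun i _ => ?_
        rw [← Finset.sum_sub_distrib]
        exact Finset.sum_congr rfl fun j _ => by ring
      rw [expand]
      linarith only [key]
  -- square root matrix facts
  set B : Matrix (Fin n) (Fin n) ℝ := CFC.sqrt M with hB
  have hBsym : ∀ i j, B j i = B i j := fun i j => by
    have := congrFun (congrFun (Matrix.nonneg_iff_posSemidef.mp (CFC.sqrt_nonneg M)).1.eq i) j
    simpa [Matrix.conjTranspose_apply] using this
  have hBB : ∀ i j, ∑ k, B i k * B k j = M i j := fun i j => by
    have := congrFun (congrFun (CFC.sqrt_mul_sqrt_self M (Matrix.nonneg_iff_posSemidef.mpr hMpsd)) i) j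
    rw [Matrix.mul_apply] at this
    exact this
  have hBcol : ∀ i j, ∑ k, B i k * B j k = S i j - w i * w j := fun i j => by
    have h1 : ∑ k, B i k * B j k = ∑ k, B i k * B k j :=
      Finset.sum_congr rfl fun k _ => by rw [hBsym k j]
    rw [h1, hBB]
    simp [hM]
  have hBa : ∀ k, ∑ i, a i * B i k = 0 := by
    have key : ∑ k, (∑ i, a i * B i k)^2 = 0 := by
      have e1 : ∑ k, (∑ i, a i * B i k)^2 = ∑ i, ∑ j, a i * a j * (∑ k, B i k * B j k) := by
        calc ∑ k, (∑ i, a i * B i k)^2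
            = ∑ k, ∑ i, ∑ j, (a i * B i k) * (a j * B j k) := by
              refine Finset.sum_congr rfl fun k _ => ?_
              rw [pow_two, Finset.sum_mul_sum]
          _ = ∑ i, ∑ j, a i * a j * ∑ k, B i k * B j k := by
              rw [Finset.sum_comm]
              refine Finset.sum_congr rfl fun i _ => ?_
              rw [Finset.sum_comm]
              refine Finset.sum_congr rfl fun j _ => ?_
              rw [Finset.mul_sum]
              exact Finset.sum_congr rfl fun k _ => by ring
      rw [e1]
      have e2 : ∑ i, ∑ j, a i * a j * (∑ k, B i k * B j k)
          = (∑ i, ∑ j, a i * S i j * a j) - (∑ i, a i * w i) * (∑ j, a j * w j) := by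
        rw [Finset.sum_mul_sum, ← Finset.sum_sub_distrib]
        refine Finset.sum_congr rfl fun i _ => ?_
        rw [← Finset.sum_sub_distrib]
        refine Finset.sum_congr rfl fun j _ => ?_
        rw [hBcol]
        ring
      rw [e2, hsaw, ← hs2, hss]
      ring
    intro k
    have := (Finset.sum_eq_zero_iff_of_nonneg (fun k _ => sq_nonneg _)).mp key k (Finset.mem_univ k)
    exact pow_eq_zero_iff (two_ne_zero) |>.mp this
  -- choice of p
  set k0 := Real.sqrt ((1 - δ) / δ) with hk0
  have hk0pos : 0 < k0 := Real.sqrt_pos.mpr (div_pos (by linarith) hδ0)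
  have htks : t < k0 * s := by rw [ht]; linarith only [hb]
  have hspos_of_t : 0 < t → 0 < s := by
    intro hts
    rcases eq_or_lt_of_le hsnn with h | h
    · exfalso; rw [← h, mul_zero] at htks; linarith only [htks, hts]
    · exact h
  have hs2pos_of_t : 0 < t → 0 < s2 := fun hts => by nlinarith only [hspos_of_t hts, hss]
  set c := if t ≤ 0 then (1:ℝ) else s2 / (s2 + t^2) with hcdef
  have hc1 : δ < c := by
    by_cases hts : t ≤ 0
    · rw [hcdef, if_pos hts]; exact hδ1
    · rw [hcdef, if_neg hts]
      push_neg at hts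
      have hs2pos : 0 < s2 := hs2pos_of_t hts
      have hspos : 0 < s := hspos_of_t hts
      rw [lt_div_iff₀ (by positivity)]
      have hk2 : k0^2 = (1-δ)/δ := by
        rw [hk0]; exact Real.sq_sqrt (div_nonneg (by linarith) hδ0.le)
      have ht2 : t^2 < k0^2 * s2 := by nlinarith only [htks, hts, hss, hk0pos]
      have hd : δ * t^2 < (1-δ) * s2 := by
        rw [hk2] at ht2
        have h3 := mul_lt_mul_of_pos_left ht2 hδ0
        calc δ*t^2 < δ*((1-δ)/δ*s2) := h3
        _ = (1-δ)*s2 := by field_simp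
      linarith only [hd, hs2pos]
  have hc2 : c ≤ 1 := by
    by_cases hts : t ≤ 0
    · rw [hcdef, if_pos hts]
    · rw [hcdef, if_neg hts]
      push_neg at hts
      rw [div_le_one (by positivity)]
      linarith only [sq_nonneg t]
  set p := (δ + c)/2 with hpdef
  have hp0 : 0 < p := by rw [hpdef]; linarith only [hδ0, hc1]
  have hpδ : δ < p := by rw [hpdef]; linarith only [hc1]
  have hp1 : p < 1 := by rw [hpdef]; linarith only [hc2, hδ1]
  have hp1' : 0 < 1 - p := by linarith only [hp1]
  set α := Real.sqrt p with hαdef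
  set β := Real.sqrt (1-p) with hβdef
  have hα : α^2 = p := Real.sq_sqrt hp0.le
  have hβ : β^2 = 1 - p := Real.sq_sqrt hp1'.le
  have hα0 : 0 < α := Real.sqrt_pos.mpr hp0
  have hβ0 : 0 < β := Real.sqrt_pos.mpr hp1'
  set y2 := Real.sqrt ((1-p)/p) with hy2def
  set y1 := -Real.sqrt (p/(1-p)) with hy1def
  have hy2pos : 0 < y2 := Real.sqrt_pos.mpr (by positivity)
  have hy2αβ : y2 = β/α := by rw [hy2def, Real.sqrt_div' _ hp0.le]
  have hy1αβ : y1 = -(α/β) := by rw [hy1def, Real.sqrt_div' _ hp1'.le]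
  have hαβ : α^2 + β^2 = 1 := by rw [hα, hβ]; ring
  have hy0 : (1-p)*y1 + p*y2 = 0 := by
    rw [hy1αβ, hy2αβ, ← hβ, ← hα]
    field_simp
    ring
  have hy1var : (1-p)*y1^2 + p*y2^2 = 1 := by
    rw [hy1αβ, hy2αβ, ← hβ, ← hα]
    field_simp
    linear_combination hαβ
  have hy2s : t < s * y2 := by
    by_cases hts : t ≤ 0
    · rcases lt_or_eq_of_le hts with h | h
      · have : 0 ≤ s * y2 := mul_nonneg hsnn hy2pos.le
        linarith only [this, h]
      · -- t = 0, need s > 0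
        have hspos : 0 < s := by
          rcases eq_or_lt_of_le hsnn with h2 | h2
          · exfalso; rw [← h2, mul_zero] at htks; linarith
          · exact h2
        have := mul_pos hspos hy2pos
        linarith only [this, h]
    · push_neg at hts
      have hspos : 0 < s := hspos_of_t hts
      have hs2pos : 0 < s2 := hs2pos_of_t hts
      have hpc : p < c := by rw [hpdef]; linarith only [hc1]
      have hple : p < s2/(s2+t^2) := by rw [hcdef, if_neg (not_le.mpr hts)] at hpc; exact hpc
      have h1 : p * (s2 + t^2) < s2 := (lt_div_iff₀ (by positivity)).mp hple
      have hy2sq : y2^2 = (1-p)/p := by rw [hy2def]; exact Real.sq_sqrt (by positivity)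
      have key : t^2 < (s*y2)^2 := by
        have hss2 : s^2 = s2 := by rw [pow_two, hss]
        rw [mul_pow, hss2, hy2sq]
        rw [show s2 * ((1-p)/p) = s2 * (1-p) / p by ring]
        rw [lt_div_iff₀ hp0]
        linarith only [h1]
      nlinarith only [key, hts, mul_nonneg hsnn hy2pos.le]
  have hsn : Real.sqrt n * Real.sqrt n = (n:ℝ) := Real.mul_self_sqrt hnn
  -- the discrete distribution
  set xp : Bool × Fin n × Bool → (Fin n → ℝ) := fun z => fun i =>
    μ i + (cond z.1 y2 y1) * w i + (cond z.2.2 1 (-1)) * Real.sqrt n * B i z.2.1 with hxp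
  set qp : Bool × Fin n × Bool → ℝ := fun z => (cond z.1 p (1-p)) * (1 / (2 * n)) with hqp
  have hq : ∀ z, 0 ≤ qp z := by
    rintro ⟨e, k, σ⟩
    rw [hqp]
    refine mul_nonneg ?_ (by positivity)
    cases e
    · simpa using hp1'.le
    · simpa using hp0.le
  have hq1 : ∑ z : Bool × Fin n × Bool, qp z = 1 := by
    rw [sum_bool_fin_bool]
    have key : ∀ k : Fin n, qp (true,k,true) + qp (true,k,false)
        + (qp (false,k,true) + qp (false,k,false)) = 1/(n:ℝ) := by
      intro k
      rw [hqp]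
      dsimp only [cond_true, cond_false]
      field_simp
      ring
    rw [Finset.sum_congr rfl fun k _ => key k, Finset.sum_const, Finset.card_univ,
      Fintype.card_fin, nsmul_eq_mul]
    field_simp
  have hninv : (n:ℝ) * ((n:ℝ))⁻¹ = 1 := mul_inv_cancel₀ hn'
  have hmean : ∀ i, ∑ z : Bool × Fin n × Bool, qp z * xp z i = μ i := by
    intro i
    rw [sum_bool_fin_bool]
    have key : ∀ k : Fin n, qp (true,k,true) * xp (true,k,true) i + qp (true,k,false) * xp (true,k,false) i
        + (qp (false,k,true) * xp (false,k,true) i + qp (false,k,false) * xp (false,k,false) i)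
        = μ i * (1/(n:ℝ)) := by
      intro k
      rw [hqp, hxp]
      dsimp only [cond_true, cond_false]
      linear_combination (w i / (n:ℝ)) * hy0
    rw [Finset.sum_congr rfl fun k _ => key k, Finset.sum_const, Finset.card_univ,
      Fintype.card_fin, nsmul_eq_mul]
    field_simp
  have hcov : ∀ i j, ∑ z : Bool × Fin n × Bool, qp z * ((xp z i - μ i) * (xp z j - μ j)) = S i j := by
    intro i j
    rw [sum_bool_fin_bool]
    have key : ∀ k : Fin n,
        qp (true,k,true) * ((xp (true,k,true) i - μ i) * (xp (true,k,true) j - μ j))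
        + qp (true,k,false) * ((xp (true,k,false) i - μ i) * (xp (true,k,false) j - μ j))
        + (qp (false,k,true) * ((xp (false,k,true) i - μ i) * (xp (false,k,true) j - μ j))
          + qp (false,k,false) * ((xp (false,k,false) i - μ i) * (xp (false,k,false) j - μ j)))
        = w i * w j * (1/(n:ℝ)) + B i k * B j k := by
      intro k
      rw [hqp, hxp]
      dsimp only [cond_true, cond_false]
      linear_combination (w i * w j / (n:ℝ)) * hy1var + (B i k * B j k / (n:ℝ)) * hsn + (B i k * B j k) * hninv
    rw [Finset.sum_congr rfl fun k _ => key k, Finset.sum_add_distrib, Finset.sum_const,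
      Finset.card_univ, Fintype.card_fin, nsmul_eq_mul, hBcol]
    field_simp
    ring
  have hax : ∀ z : Bool × Fin n × Bool, ∑ i, a i * xp z i = m + (cond z.1 y2 y1) * s := by
    intro z
    have e1 : ∀ i, a i * xp z i
        = a i * μ i + (cond z.1 y2 y1) * (a i * w i)
          + ((cond z.2.2 1 (-1)) * Real.sqrt n) * (a i * B i z.2.1) := by
      intro i
      rw [hxp]
      ring
    rw [Finset.sum_congr rfl fun i _ => e1 i, Finset.sum_add_distrib, Finset.sum_add_distrib,
      ← Finset.mul_sum, ← Finset.mul_sum, hsaw, hBa, mul_zero, add_zero, ← hm]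
  -- assemble
  refine ⟨discMeasure xp qp, discMeasure_isProb _ _ hq hq1,
    fun i => discMeasure_memLp _ _ hq hq1 i, ?_, ?_, ?_⟩
  · intro i
    rw [discMeasure_integral _ _ hq (measurable_pi_apply i).stronglyMeasurable]
    exact hmean i
  · intro i j
    rw [discMeasure_integral _ _ hq (f := fun τ : Fin n → ℝ => (τ i - μ i) * (τ j - μ j))
      (Measurable.stronglyMeasurable (by fun_prop))]
    exact hcov i j
  · have hA : MeasurableSet {τ : Fin n → ℝ | ∑ i, a i * τ i ≤ b} :=
      measurableSet_le (Finset.measurable_sum (f := fun i (τ : Fin n → ℝ) => a i * τ i) Finset.univ fun i _ =>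
        (by fun_prop)) measurable_const
    rw [discMeasure_apply _ _ hA]
    have hbound : ∀ z : Bool × Fin n × Bool,
        (if xp z ∈ {τ : Fin n → ℝ | ∑ i, a i * τ i ≤ b} then ENNReal.ofReal (qp z) else 0)
        ≤ (cond z.1 0 (ENNReal.ofReal ((1-p) * (1/(2*(n:ℝ)))))) := by
      rintro ⟨e, k, σ⟩
      cases e
      · dsimp only [cond_false]
        split_ifs with h
        · rw [hqp]
          dsimp only [cond_false]
          exact le_rfl
        · exact zero_le
      · dsimp only [cond_true]
        have hnotin : ¬ (∑ i, a i * xp (true,k,σ) i ≤ b) := by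
          rw [hax (true,k,σ)]
          dsimp only [cond_true]
          have : t < s * y2 := hy2s
          rw [ht] at this
          push_neg
          linarith only [this]
        have hnotin' : xp (true,k,σ) ∉ {τ : Fin n → ℝ | ∑ i, a i * τ i ≤ b} := hnotin
        rw [if_neg hnotin']
    calc ∑ z : Bool × Fin n × Bool,
        (if xp z ∈ {τ : Fin n → ℝ | ∑ i, a i * τ i ≤ b} then ENNReal.ofReal (qp z) else 0)
        ≤ ∑ z : Bool × Fin n × Bool, (cond z.1 0 (ENNReal.ofReal ((1-p) * (1/(2*(n:ℝ)))))) :=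
          Finset.sum_le_sum fun z _ => hbound z
      _ = ENNReal.ofReal (1 - p) := by
          rw [sum_bool_fin_bool]
          dsimp only [cond_true, cond_false]
          have hC : (0:ℝ) ≤ (1-p) * (1/(2*(n:ℝ))) := mul_nonneg hp1'.le (by positivity)
          have e3 : ∀ _k : Fin n, ((0:ENNReal) + 0 + (ENNReal.ofReal ((1-p) * (1/(2*(n:ℝ))))
              + ENNReal.ofReal ((1-p) * (1/(2*(n:ℝ)))))) = ENNReal.ofReal ((1-p)/(n:ℝ)) := by
            intro _k
            rw [zero_add, zero_add, ← ENNReal.ofReal_add hC hC]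
            congr 1
            field_simp
            ring
          rw [Finset.sum_congr rfl fun k _ => e3 k, Finset.sum_const, Finset.card_univ,
            Fintype.card_fin, nsmul_eq_mul]
          rw [show ((n:ENNReal)) = ENNReal.ofReal ((n:ℝ)) from (ENNReal.ofReal_natCast n).symm,
            ← ENNReal.ofReal_mul (by positivity)]
          congr 1
          field_simp
      _ < ENNReal.ofReal (1 - δ) := by
          rw [ENNReal.ofReal_lt_ofReal_iff (by linarith only [hδ1])]
          linarith only [hpδ]



lemma quad_pos' {n : ℕ} {S : Matrix (Fin n) (Fin n) ℝ} (hS : S.PosDef) {a : Fin n → ℝ}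
    (ha : a ≠ 0) : 0 < ∑ i, ∑ j, a i * S i j * a j := by
  have h := hS.dotProduct_mulVec_pos ha
  have e : (star a) ⬝ᵥ S.mulVec a = ∑ i, ∑ j, a i * S i j * a j := by
    simp [dotProduct, Matrix.mulVec, Finset.mul_sum, mul_assoc]
  rwa [e] at h

set_option maxHeartbeats 1000000 in
/-- Worst-case chance constraint over a mean–variance ambiguity set: for `a ∈ ℝⁿ`, `b ∈ ℝ`,
and `F` the set of all distributions on `ℝⁿ` with mean vector `μ` and positive definite
covariance `S`, the constraint `inf_{P ∈ F} P(aᵀτ ≤ b) ≥ 1 - δ` holds iff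
`aᵀμ + √((1-δ)/δ) · √(aᵀ S a) ≤ b`. -/
theorem worst_case_chance_constraint {n : ℕ} (a : Fin n → ℝ) (b : ℝ)
    (μ : Fin n → ℝ) (S : Matrix (Fin n) (Fin n) ℝ) (hS : S.PosDef)
    (δ : ℝ) (hδ : δ ∈ Set.Ioo (0 : ℝ) 1) :
    (∀ P : Measure (Fin n → ℝ), IsProbabilityMeasure P →
        (∀ i, MemLp (fun τ => τ i) 2 P) →
        (∀ i, ∫ τ, τ i ∂P = μ i) →
        (∀ i j, ∫ τ, (τ i - μ i) * (τ j - μ j) ∂P = S i j) →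
        ENNReal.ofReal (1 - δ) ≤ P {τ | ∑ i, a i * τ i ≤ b}) ↔
      ∑ i, a i * μ i +
        Real.sqrt ((1 - δ) / δ) * Real.sqrt (∑ i, ∑ j, a i * S i j * a j) ≤ b := by
  obtain ⟨hδ0, hδ1⟩ := hδ
  constructor
  · -- forward direction, by contraposition
    intro h
    by_contra hbc
    push_neg at hbc
    rcases Nat.eq_zero_or_pos n with hn | hn
    · subst hn
      have h0 : ∑ i : Fin 0, a i * μ i = 0 := by simp
      have h1 : ∑ i : Fin 0, ∑ j : Fin 0, a i * S i j * a j = 0 := by simp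
      rw [h0, h1, Real.sqrt_zero, mul_zero, add_zero] at hbc
      have hP := h (Measure.dirac 0) (by infer_instance) (fun i => i.elim0)
        (fun i => i.elim0) (fun i => i.elim0)
      have hempty : {τ : Fin 0 → ℝ | ∑ i, a i * τ i ≤ b} = ∅ := by
        ext τ
        simp only [Set.mem_setOf_eq, Set.mem_empty_iff_false, iff_false]
        intro hle
        simp only [Finset.univ_eq_empty, Finset.sum_empty] at hle
        linarith
      rw [hempty, measure_empty, le_zero_iff, ENNReal.ofReal_eq_zero] at hP
      linarith
    · obtain ⟨P, hPp, hL2, hmean, hcov, hlt⟩ :=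
        exists_bad_measure hn a b μ S hS δ ⟨hδ0, hδ1⟩ hbc
      exact absurd (h P hPp hL2 hmean hcov) (not_le.mpr hlt)
  · -- backward direction
    intro hle P hPp hL2 hmean hcov
    by_cases ha : a = 0
    · have hb0 : (0:ℝ) ≤ b := by
        have h0 : ∑ i, a i * μ i = 0 := by simp [ha]
        have h1 : (∑ i, ∑ j, a i * S i j * a j) = 0 := by simp [ha]
        rw [h0, h1, Real.sqrt_zero, mul_zero, add_zero] at hle
        exact hle
      have huniv : {τ : Fin n → ℝ | ∑ i, a i * τ i ≤ b} = Set.univ := by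
        ext τ
        simp [ha, hb0]
      rw [huniv, measure_univ]
      exact ENNReal.ofReal_le_one.mpr (by linarith)
    · set m := ∑ i, a i * μ i with hm
      set s2 := ∑ i, ∑ j, a i * S i j * a j with hs2
      have hs2pos : 0 < s2 := quad_pos' hS ha
      set s := Real.sqrt s2 with hs
      have hspos : 0 < s := Real.sqrt_pos.mpr hs2pos
      have hss : s^2 = s2 := Real.sq_sqrt hs2pos.le
      set k0 := Real.sqrt ((1-δ)/δ) with hk0def
      have hk0 : 0 < k0 := Real.sqrt_pos.mpr (div_pos (by linarith) hδ0)
      have hk2 : k0^2 = (1-δ)/δ := Real.sq_sqrt (div_nonneg (by linarith) hδ0.le)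
      have ht0 : 0 < b - m := by
        have := mul_pos hk0 hspos
        linarith only [this, hle]
      -- the linear statistic
      have hXmem : MemLp (fun τ : Fin n → ℝ => ∑ i, a i * τ i) 2 P := by
        exact memLp_finset_sum (f := fun i (τ : Fin n → ℝ) => a i * τ i) Finset.univ
          (fun i _ => (hL2 i).const_mul (a i))
      have hYmem : MemLp (fun τ : Fin n → ℝ => (∑ i, a i * τ i) - m) 2 P :=
        hXmem.sub (memLp_const m)
      have hXint : Integrable (fun τ : Fin n → ℝ => ∑ i, a i * τ i) P :=
        hXmem.integrable one_le_two
      have hEX : ∫ τ, (∑ i, a i * τ i) ∂P = m := by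
        rw [integral_finset_sum Finset.univ
          (fun i _ => ((hL2 i).integrable one_le_two).const_mul (a i))]
        exact Finset.sum_congr rfl fun i _ => by
          rw [MeasureTheory.integral_const_mul, hmean i]
      have hYmean : ∫ τ, ((∑ i, a i * τ i) - m) ∂P = 0 := by
        rw [integral_sub hXint (integrable_const m), hEX, integral_const]
        simp
      have hint2 : ∀ i j : Fin n,
          Integrable (fun τ : Fin n → ℝ => a i * a j * ((τ i - μ i) * (τ j - μ j))) P := by
        intro i j
        exact (memLp_mul_integrable ((hL2 i).sub (memLp_const (μ i)))
          ((hL2 j).sub (memLp_const (μ j)))).const_mul (a i * a j)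
      have hYvar : ∫ τ, ((∑ i, a i * τ i) - m)^2 ∂P = s2 := by
        have hYeq : ∀ τ : Fin n → ℝ, ((∑ i, a i * τ i) - m)^2
            = ∑ i, ∑ j, a i * a j * ((τ i - μ i) * (τ j - μ j)) := by
          intro τ
          have e1 : (∑ i, a i * τ i) - m = ∑ i, a i * (τ i - μ i) := by
            rw [hm, ← Finset.sum_sub_distrib]
            exact Finset.sum_congr rfl fun i _ => by ring
          rw [e1, pow_two, Finset.sum_mul_sum]
          exact Finset.sum_congr rfl fun i _ => Finset.sum_congr rfl fun j _ => by ring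
        rw [integral_congr_ae (Filter.Eventually.of_forall hYeq)]
        rw [integral_finset_sum Finset.univ
          (fun i _ => integrable_finset_sum Finset.univ (fun j _ => hint2 i j))]
        rw [hs2]
        refine Finset.sum_congr rfl fun i _ => ?_
        rw [integral_finset_sum Finset.univ (fun j _ => hint2 i j)]
        refine Finset.sum_congr rfl fun j _ => ?_
        rw [MeasureTheory.integral_const_mul, hcov i j]
        ring
      have hA : MeasurableSet {τ : Fin n → ℝ | ∑ i, a i * τ i ≤ b} :=
        measurableSet_le (Finset.measurable_sum (f := fun i (τ : Fin n → ℝ) => a i * τ i) Finset.univ fun i _ =>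
          (by fun_prop)) measurable_const
      have hcant := cantelli P hYmem hYmean hYvar ht0
      have hbd : s2/(s2 + (b-m)^2) ≤ δ := by
        rw [div_le_iff₀ (by positivity)]
        have h1 : k0*s ≤ b - m := by linarith only [hle]
        have h2 : ((1-δ)/δ) * s2 ≤ (b-m)^2 := by nlinarith only [h1, hk2, hss, mul_pos hk0 hspos]
        have h3 : δ * (((1-δ)/δ) * s2) = (1-δ) * s2 := by field_simp
        nlinarith only [h2, h3, hδ0, hs2pos]
      have hsub : {τ : Fin n → ℝ | ∑ i, a i * τ i ≤ b}ᶜ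
          ⊆ {τ : Fin n → ℝ | b - m ≤ (∑ i, a i * τ i) - m} := by
        intro τ hτ
        simp only [Set.mem_compl_iff, Set.mem_setOf_eq, not_le] at hτ ⊢
        linarith
      have hcompl : P {τ : Fin n → ℝ | ∑ i, a i * τ i ≤ b}ᶜ ≤ ENNReal.ofReal δ := by
        refine (measure_mono hsub).trans ?_
        have hne : P {τ : Fin n → ℝ | b - m ≤ (∑ i, a i * τ i) - m} ≠ ⊤ := measure_ne_top _ _
        rw [← ENNReal.ofReal_toReal hne]
        exact ENNReal.ofReal_le_ofReal (le_trans hcant hbd)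
      have htot : P {τ : Fin n → ℝ | ∑ i, a i * τ i ≤ b}
          + P {τ : Fin n → ℝ | ∑ i, a i * τ i ≤ b}ᶜ = 1 := by
        rw [measure_add_measure_compl hA, measure_univ]
      have hkey : ENNReal.ofReal (1-δ) + ENNReal.ofReal δ
          ≤ P {τ : Fin n → ℝ | ∑ i, a i * τ i ≤ b} + ENNReal.ofReal δ := by
        rw [← ENNReal.ofReal_add (by linarith) hδ0.le,
          show 1-δ+δ = 1 by ring, ENNReal.ofReal_one]
        rw [← htot]
        exact add_le_add_right hcompl _
      exact (ENNReal.add_le_add_iff_right ENNReal.ofReal_ne_top).mp hkey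
end
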